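/- Let θ > 0 with Q_n(θ) > 0 for all n, and let Q_n(·; θ) denote the polynomials associated with the transformed parameters p_j(θ) = (Q_{j+1}(θ)/Q_j(θ)) p_j/θ, r_j(θ) = r_j/θ, q_{j+1}(θ) = (Q_j(θ)/Q_{j+1}(θ)) q_{j+1}/θ (i.e., defined by the same three-term recurrence with these coefficients). Then Q_n(x; θ) = Q_n(θ x)/Q_n(θ) for all n ≥ 0 and all real x. -/

import Mathlib

open Finset Filter

theorem stmt14 (p q r : ℕ → ℝ) (Q : ℕ → ℝ → ℝ)
    (hp : ∀ j, 0 < p j) (hq : ∀ j, 0 < q (j + 1)) (hr : ∀ j, 0 ≤ r j)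
    (hq0 : q 0 = 0) (hs : ∀ j, p j + q j + r j = 1)
    (hQ0 : ∀ x : ℝ, Q 0 x = 1) (hQ1 : ∀ x : ℝ, p 0 * Q 1 x = x - r 0)
    (hQrec : ∀ n : ℕ, ∀ x : ℝ, x * Q (n + 1) x =
      q (n + 1) * Q n x + r (n + 1) * Q (n + 1) x + p (n + 1) * Q (n + 2) x)
    (θ : ℝ) (hθ : 0 < θ) (hQθ : ∀ n, 0 < Q n θ)
    (pθ qθ rθ : ℕ → ℝ) (Qθ : ℕ → ℝ → ℝ)
    (hpθ : ∀ j, pθ j = Q (j + 1) θ / Q j θ * p j / θ)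
    (hrθ : ∀ j, rθ j = r j / θ)
    (hqθ0 : qθ 0 = 0)
    (hqθ : ∀ j, qθ (j + 1) = Q j θ / Q (j + 1) θ * q (j + 1) / θ)
    (hQθ0 : ∀ x : ℝ, Qθ 0 x = 1) (hQθ1 : ∀ x : ℝ, pθ 0 * Qθ 1 x = x - rθ 0)
    (hQθrec : ∀ n : ℕ, ∀ x : ℝ, x * Qθ (n + 1) x =
      qθ (n + 1) * Qθ n x + rθ (n + 1) * Qθ (n + 1) x + pθ (n + 1) * Qθ (n + 2) x) :
    ∀ (n : ℕ) (x : ℝ), Qθ n x = Q n (θ * x) / Q n θ := by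
  have hQne : ∀ n, Q n θ ≠ 0 := fun n => (hQθ n).ne'
  have hpne : ∀ j, p j ≠ 0 := fun j => (hp j).ne'
  have hθne : θ ≠ 0 := hθ.ne'
  have base0 : ∀ x : ℝ, Qθ 0 x = Q 0 (θ * x) / Q 0 θ := by
    intro x; rw [hQθ0, hQ0, hQ0]; norm_num
  have base1 : ∀ x : ℝ, Qθ 1 x = Q 1 (θ * x) / Q 1 θ := by
    intro x
    have h1 := hQθ1 x
    rw [hpθ 0, hrθ 0, hQ0] at h1
    have h2 := hQ1 (θ * x)
    field_simp [hQne 1] at h1 ⊢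
    refine mul_left_cancel₀ (hpne 0) ?_
    linear_combination h1 - h2
  have key : ∀ n : ℕ, (∀ x : ℝ, Qθ n x = Q n (θ * x) / Q n θ) ∧
      (∀ x : ℝ, Qθ (n + 1) x = Q (n + 1) (θ * x) / Q (n + 1) θ) := by
    intro n
    induction n with
    | zero => exact ⟨base0, base1⟩
    | succ n ih =>
      refine ⟨ih.2, fun x => ?_⟩
      have h1 := hQθrec n x
      rw [hqθ n, hrθ (n + 1), hpθ (n + 1), ih.1 x, ih.2 x] at h1
      have h2 := hQrec n (θ * x)
      have hne1 := hQne n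
      have hne2 := hQne (n + 1)
      have hne3 := hQne (n + 2)
      simp only [show n + 1 + 1 = n + 2 from rfl] at h1 ⊢
      field_simp at h1 ⊢
      have hK : p (n + 1) * (Q n θ * Q (n + 1) θ ^ 3 * θ ^ 2) ≠ 0 := by
        have h3 := hp (n + 1); have h4 := hQθ n; have h5 := hQθ (n + 1)
        positivity
      refine mul_left_cancel₀ hK ?_
      rw [mul_comm x θ] at h1 ⊢
      linear_combination (Q n θ * Q (n + 1) θ ^ 3 * θ ^ 2) * (h2 - h1)
  exact fun n => (key n).1
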